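/- arXiv:2202.04999 — 2 statements merged into one kernel-verified Lean document; each statement's English description precedes it below -/
import Mathlib

section
/- Let A and B be bounded self-adjoint operators on a complex Hilbert space H. Then A and B commute (AB = BA) if and only if their exponentials commute (e^A e^B = e^B e^A). -/
open StarAlgebra in
lemma commute_cfc {A : Type*} [CStarAlgebra A] {x a : A} (hx : IsSelfAdjoint x)
    (h : Commute x a) (f : ℂ → ℂ) : Commute x (cfc f a) := by
  have hclosed : IsClosed ((StarSubalgebra.centralizer ℂ {x} : Set A)) := by
    rw [StarSubalgebra.coe_centralizer]
    have : ({x} ∪ star {x} : Set A).centralizer =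
        ⋂ g ∈ ({x} ∪ star {x} : Set A), {y | g * y = y * g} := by
      ext y; simp [Set.centralizer, Set.mem_iInter]
    rw [this]
    exact isClosed_biInter fun g _ ↦
      isClosed_eq (continuous_const.mul continuous_id) (continuous_id.mul continuous_const)
  have ha : a ∈ StarSubalgebra.centralizer ℂ {x} := by
    rw [StarSubalgebra.mem_centralizer_iff]
    rintro g rfl
    exact ⟨h, by rw [hx.star_eq]; exact h⟩
  have hle := elemental.le_of_mem (R := ℂ) hclosed ha
  have hmem := hle (cfc_mem_elemental f a)
  rw [StarSubalgebra.mem_centralizer_iff] at hmem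
  exact (hmem x rfl).1

variable {H : Type*} [NormedAddCommGroup H] [InnerProductSpace ℂ H] [CompleteSpace H]

/-- The exponential of a bounded operator, `e^T = ∑ Tⁿ/n!`. -/
noncomputable def opExp (T : H →L[ℂ] H) : H →L[ℂ] H := NormedSpace.exp T

/-- The logarithm of a (positive invertible) bounded operator, via the
continuous functional calculus. -/
noncomputable def opLog (A : H →L[ℂ] H) : H →L[ℂ] H := cfc Real.log A

/-- The generalized power `A^B = e^{B log A}`. -/
noncomputable def gpow (A B : H →L[ℂ] H) : H →L[ℂ] H := opExp (B * opLog A)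

theorem stmt0 (A B : H →L[ℂ] H) (hA : IsSelfAdjoint A) (hB : IsSelfAdjoint B) :
    A * B = B * A ↔ opExp A * opExp B = opExp B * opExp A := by
  constructor
  · intro h
    exact (Commute.exp h)
  · intro h
    simp only [opExp] at h
    set a := NormedSpace.exp A with ha_def
    set b := NormedSpace.exp B with hb_def
    have ha : IsSelfAdjoint a := by
      rw [ha_def, IsSelfAdjoint, NormedSpace.star_exp, hA.star_eq]
    have hb : IsSelfAdjoint b := by
      rw [hb_def, IsSelfAdjoint, NormedSpace.star_exp, hB.star_eq]
    have hab : Commute a b := h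
    have hA' : A = cfc Real.log a := (CFC.log_exp A hA).symm
    have hB' : B = cfc Real.log b := (CFC.log_exp B hB).symm
    have h1 : Commute b A := by
      rw [hA', cfc_real_eq_complex (a := a) Real.log ha]
      exact commute_cfc hb hab.symm _
    have h2 : Commute A B := by
      have hA'' : IsSelfAdjoint A := hA
      rw [hB', cfc_real_eq_complex (a := b) Real.log hb]
      exact commute_cfc hA'' h1.symm _
    exact h2
end

section
/- Let A ∈ B(H) be positive and invertible and let B ∈ B(H) be normal with AB = BA. Then the generalized power A^B = e^{B log A} is normal. -/
variable {H : Type*} [NormedAddCommGroup H] [InnerProductSpace ℂ H] [CompleteSpace H]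

lemma commute_cfc_of_commute {A B : H →L[ℂ] H} (hA : IsSelfAdjoint A)
    (h : Commute B A) (f : ℝ → ℝ) : Commute B (cfc f A) := by
  by_cases hf : ContinuousOn f (spectrum ℝ A)
  · rw [cfc_apply f A hA hf]
    have key : ∀ g : C(spectrum ℝ A, ℝ), Commute B (cfcHom hA g) := by
      intro g
      induction g using ContinuousMap.induction_on_of_compact with
      | const r =>
          have : (ContinuousMap.const (spectrum ℝ A) r)
              = algebraMap ℝ C(spectrum ℝ A, ℝ) r := rfl
          rw [this, AlgHomClass.commutes]
          exact Algebra.commute_algebraMap_right r B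
      | id =>
          rw [cfcHom_id hA]
          exact h
      | star_id =>
          rw [show star ((ContinuousMap.id ℝ).restrict (spectrum ℝ A))
              = (ContinuousMap.id ℝ).restrict (spectrum ℝ A) from star_trivial _,
            cfcHom_id hA]
          exact h
      | add f g hf hg =>
          rw [map_add]
          exact hf.add_right hg
      | mul f g hf hg =>
          rw [map_mul]
          exact hf.mul_right hg
      | frequently f hf =>
          have hclosed : IsClosed {g : C(spectrum ℝ A, ℝ) | Commute B (cfcHom hA g)} := by
            have : Continuous (cfcHom hA (R := ℝ) : C(spectrum ℝ A, ℝ) → H →L[ℂ] H) :=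
              (cfcHom_isClosedEmbedding hA).continuous
            exact isClosed_eq (by continuity) (by continuity)
          exact hclosed.closure_subset (mem_closure_iff_frequently.mpr hf)
    exact key _
  · rw [cfc_apply_of_not_continuousOn A hf]
    exact Commute.zero_right B

theorem stmt16 (A B : H →L[ℂ] H) (hA : 0 ≤ A) (hAu : IsUnit A)
    (hB : B * star B = star B * B) (hcomm : A * B = B * A) :
    gpow A B * star (gpow A B) = star (gpow A B) * gpow A B := by
  have hA' : IsSelfAdjoint A := .of_nonneg hA
  set L : H →L[ℂ] H := opLog A with hLdef
  have hL : IsSelfAdjoint L := cfc_predicate Real.log A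
  have hBA : Commute B A := hcomm.symm
  have hBsA : Commute (star B) A := by
    have := congrArg star hcomm
    simp only [star_mul, hA'.star_eq] at this
    exact this
  have hBL : Commute B L := commute_cfc_of_commute hA' hBA Real.log
  have hBsL : Commute (star B) L := commute_cfc_of_commute hA' hBsA Real.log
  set X : H →L[ℂ] H := B * L with hXdef
  have hstarX : star X = L * star B := by
    rw [hXdef, star_mul, hL.star_eq]
  have hLL : Commute (star B) (L * L) := hBsL.mul_right hBsL
  have h1 : Commute (star B * B) L := hBsL.mul_left hBL
  have h2 : Commute (star B * B) (L * L) := h1.mul_right h1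
  have hXcomm : Commute X (star X) := by
    have e1 : X * star X = (star B * B) * (L * L) := by
      rw [hXdef, hstarX]
      calc B * L * (L * star B) = B * ((L * L) * star B) := by simp only [mul_assoc]
        _ = B * (star B * (L * L)) := by rw [← hLL.eq]
        _ = B * star B * (L * L) := by simp only [mul_assoc]
        _ = star B * B * (L * L) := by rw [hB]
    have e2 : star X * X = (star B * B) * (L * L) := by
      rw [hXdef, hstarX]
      calc L * star B * (B * L) = L * ((star B * B) * L) := by simp only [mul_assoc]
        _ = L * (L * (star B * B)) := by rw [h1.eq]
        _ = (L * L) * (star B * B) := by simp only [mul_assoc]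
        _ = (star B * B) * (L * L) := h2.symm.eq
    exact e1.trans e2.symm
  have hstar_exp : star (gpow A B) = NormedSpace.exp (star X) := by
    rw [gpow, opExp, ← hLdef, ← hXdef, NormedSpace.star_exp]
  have : Commute (NormedSpace.exp X) (NormedSpace.exp (star X)) := hXcomm.exp
  rw [hstar_exp]
  show gpow A B * _ = _ * gpow A B
  rw [show gpow A B = NormedSpace.exp X from rfl]
  exact this.eq
end
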